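/- Let d ≥ 1 be an integer and g ∈ ℂ^d a unit vector. The rank over ℂ of the Gram matrix G(g) equals the number of pairs (k,ℓ) ∈ (ℤ/dℤ)² for which ⟨g, M^k T^ℓ g⟩ ≠ 0. Consequently, G(g) has full rank d² if and only if ⟨g, M^k T^ℓ g⟩ ≠ 0 for all (k,ℓ) ∈ (ℤ/dℤ)². -/

import Mathlib

open Complex Finset
set_option linter.unusedSectionVars false

noncomputable section

/-- `gw d` is the primitive `d`-th root of unity `ω = exp(2πi/d)`. -/
def gw (d : ℕ) : ℂ := Complex.exp (2 * Real.pi * Complex.I / d)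

/-- `modT d k l g = M^k T^ℓ g`, where `(Mg)_n = ω^n g_n` and `(Tg)_n = g_{n-1}`. -/
def modT (d : ℕ) (k l : ZMod d) (g : ZMod d → ℂ) : ZMod d → ℂ :=
  fun n => gw d ^ (k.val * n.val) * g (n - l)

/-- `inn d x y = ⟨x,y⟩ = Σ_n x_n conj(y_n)`. -/
def inn (d : ℕ) [NeZero d] (x y : ZMod d → ℂ) : ℂ :=
  ∑ n : ZMod d, x n * (starRingEnd ℂ) (y n)

/-- The `d² × d²` Gram matrix `G(g)` with entries `|⟨M^k T^ℓ g, M^{k'} T^{ℓ'} g⟩|²`. -/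
def Gmat (d : ℕ) [NeZero d] (g : ZMod d → ℂ) :
    Matrix (ZMod d × ZMod d) (ZMod d × ZMod d) ℂ :=
  fun p q =>
    ((‖inn d (modT d p.1 p.2 g) (modT d q.1 q.2 g)‖ ^ 2 : ℝ) : ℂ)

variable (d : ℕ) [NeZero d]

lemma gw_prim : IsPrimitiveRoot (gw d) d :=
  Complex.isPrimitiveRoot_exp d (NeZero.ne d)

lemma gw_pow_d : gw d ^ d = 1 := (gw_prim d).pow_eq_one

lemma gw_pow_mod (a : ℕ) : gw d ^ (a % d) = gw d ^ a := by
  conv_rhs => rw [← Nat.div_add_mod a d]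
  rw [pow_add, pow_mul, gw_pow_d, one_pow, one_mul]

def ee (x : ZMod d) : ℂ := gw d ^ x.val

lemma ee_add (x y : ZMod d) : ee d (x + y) = ee d x * ee d y := by
  rw [ee, ee, ee, ← pow_add, ZMod.val_add, gw_pow_mod]

lemma ee_zero : ee d 0 = 1 := by simp [ee]

lemma ee_val_mul (k n : ZMod d) : gw d ^ (k.val * n.val) = ee d (k * n) := by
  rw [ee, ZMod.val_mul, gw_pow_mod]

lemma ee_mul_neg (x : ZMod d) : ee d x * ee d (-x) = 1 := by
  rw [← ee_add, add_neg_cancel, ee_zero]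

lemma ee_ne_zero (x : ZMod d) : ee d x ≠ 0 :=
  left_ne_zero_of_mul_eq_one (ee_mul_neg d x)

lemma abs_gw : ‖gw d‖ = 1 := by
  rw [gw, Complex.norm_exp]
  have : (2 * ↑Real.pi * Complex.I / ↑d) = (((2 * Real.pi / d : ℝ)) : ℂ) * Complex.I := by
    push_cast; ring
  rw [this]
  simp

lemma ee_conj (x : ZMod d) : (starRingEnd ℂ) (ee d x) = ee d (-x) := by
  have h2 : ee d x * (starRingEnd ℂ) (ee d x) = 1 := by
    have ha : ‖ee d x‖ = 1 := by rw [ee, norm_pow, abs_gw, one_pow]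
    rw [Complex.mul_conj, Complex.normSq_eq_norm_sq, ha]
    norm_num
  exact mul_left_cancel₀ (ee_ne_zero d x) (h2.trans (ee_mul_neg d x).symm)

lemma ee_sum (c : ZMod d) : ∑ n : ZMod d, ee d (c * n) = if c = 0 then (d : ℂ) else 0 := by
  have hpow : ∀ n : ZMod d, ee d (c * n) = ee d c ^ n.val := by
    intro n
    rw [ee, ee, ← pow_mul, ZMod.val_mul, gw_pow_mod]
  have hbij : ∑ n : ZMod d, ee d (c * n) = ∑ i ∈ Finset.range d, ee d c ^ i := by
    rw [show ∑ n : ZMod d, ee d (c * n) = ∑ n : ZMod d, ee d c ^ n.val from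
      Finset.sum_congr rfl fun n _ => hpow n]
    exact Finset.sum_nbij' (fun n => n.val) (fun i => (i : ZMod d))
      (fun n _ => Finset.mem_range.2 (ZMod.val_lt n))
      (fun i _ => Finset.mem_univ _)
      (fun n _ => ZMod.natCast_rightInverse n)
      (fun i hi => ZMod.val_cast_of_lt (Finset.mem_range.1 hi))
      (fun n _ => rfl)
  rw [hbij]
  by_cases hc : c = 0
  · simp [hc, ee_zero]
  · have hne1 : ee d c ≠ 1 := by
      have hvpos : 0 < c.val := Nat.pos_of_ne_zero (fun h => hc ((ZMod.val_eq_zero c).mp h))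
      exact (gw_prim d).pow_ne_one_of_pos_of_lt hvpos.ne' (ZMod.val_lt c)
    rw [if_neg hc, geom_sum_eq hne1]
    have : ee d c ^ d = 1 := by rw [ee, ← pow_mul, mul_comm, pow_mul, gw_pow_d, one_pow]
    rw [this, sub_self, zero_div]

variable (g : ZMod d → ℂ)

def Fc (a b : ZMod d) : ℂ := inn d g (modT d a b g)

def AA (a b : ZMod d) : ℂ := Fc d g a b * (starRingEnd ℂ) (Fc d g a b)

lemma Fc_eq (a b : ZMod d) :
    Fc d g a b = ∑ n : ZMod d, ee d (-(a*n)) * (g n * (starRingEnd ℂ) (g (n - b))) := by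
  unfold Fc inn modT
  refine Finset.sum_congr rfl fun n _ => ?_
  rw [ee_val_mul, map_mul, ee_conj]
  ring

lemma AA_expand (a b : ZMod d) :
    AA d g a b = ∑ n : ZMod d, ∑ m : ZMod d,
      ee d (a*(m-n)) *
        (g n * (starRingEnd ℂ) (g (n-b)) * ((starRingEnd ℂ) (g m) * g (m-b))) := by
  rw [AA, Fc_eq, map_sum, Finset.sum_mul_sum]
  refine Finset.sum_congr rfl fun n _ => Finset.sum_congr rfl fun m _ => ?_
  rw [map_mul, map_mul, ee_conj, neg_neg, Complex.conj_conj]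
  rw [show (a*(m-n) : ZMod d) = -(a*n) + a*m by ring, ee_add]
  ring

lemma inn_modT (p q : ZMod d × ZMod d) :
    inn d (modT d p.1 p.2 g) (modT d q.1 q.2 g)
      = ee d ((p.1-q.1)*p.2) * Fc d g (q.1-p.1) (q.2-p.2) := by
  have step1 : inn d (modT d p.1 p.2 g) (modT d q.1 q.2 g)
      = ∑ n : ZMod d, ee d ((p.1-q.1)*n) * (g (n - p.2) * (starRingEnd ℂ) (g (n - q.2))) := by
    unfold inn modT
    refine Finset.sum_congr rfl fun n _ => ?_
    rw [ee_val_mul, map_mul, ee_val_mul, ee_conj]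
    rw [show ((p.1-q.1)*n : ZMod d) = p.1*n + -(q.1*n) by ring, ee_add]
    ring
  have step2 : ∑ n : ZMod d, ee d ((p.1-q.1)*n) * (g (n - p.2) * (starRingEnd ℂ) (g (n - q.2)))
      = ∑ n : ZMod d, ee d ((p.1-q.1)*(n+p.2)) * (g n * (starRingEnd ℂ) (g (n - (q.2-p.2)))) := by
    refine (Fintype.sum_equiv (Equiv.addRight p.2)
      (fun n => ee d ((p.1-q.1)*(n+p.2)) * (g n * (starRingEnd ℂ) (g (n - (q.2-p.2)))))
      (fun n => ee d ((p.1-q.1)*n) * (g (n - p.2) * (starRingEnd ℂ) (g (n - q.2)))) ?_).symm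
    intro n
    simp only [Equiv.coe_addRight]
    rw [show (n + p.2 - p.2 : ZMod d) = n by ring,
        show (n + p.2 - q.2 : ZMod d) = n - (q.2 - p.2) by ring]
  rw [step1, step2, Fc_eq, Finset.mul_sum]
  refine Finset.sum_congr rfl fun n _ => ?_
  rw [show ((p.1-q.1)*(n+p.2) : ZMod d) = (p.1-q.1)*p.2 + ((p.1-q.1)*n) by ring, ee_add,
      show (-( (q.1-p.1)*n) : ZMod d) = (p.1-q.1)*n by ring]
  ring

lemma Gmat_eq (p q : ZMod d × ZMod d) :
    Gmat d g p q = AA d g (q.1-p.1) (q.2-p.2) := by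
  have hz : ∀ z : ℂ, ((‖z‖ ^ 2 : ℝ) : ℂ) = z * (starRingEnd ℂ) z := by
    intro z
    rw [Complex.sq_norm, Complex.mul_conj]
  rw [Gmat]
  rw [hz, inn_modT, AA, map_mul, ee_conj, mul_mul_mul_comm, ee_mul_neg, one_mul]

lemma key (α β : ZMod d) :
    ∑ a : ZMod d, ∑ b : ZMod d, AA d g a b * ee d (a*β + b*α)
      = d * AA d g (-α) β := by
  have step1 : ∑ a : ZMod d, ∑ b : ZMod d, AA d g a b * ee d (a*β + b*α)
      = ∑ b : ZMod d, ∑ n : ZMod d, ∑ m : ZMod d, ∑ a : ZMod d,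
          ee d ((m-n+β)*a) *
            (ee d (b*α) * (g n * (starRingEnd ℂ) (g (n-b)) * ((starRingEnd ℂ) (g m) * g (m-b)))) := by
    have e1 : ∀ a b : ZMod d, AA d g a b * ee d (a*β + b*α)
        = ∑ n : ZMod d, ∑ m : ZMod d,
            ee d ((m-n+β)*a) *
              (ee d (b*α) * (g n * (starRingEnd ℂ) (g (n-b)) * ((starRingEnd ℂ) (g m) * g (m-b)))) := by
      intro a b
      rw [AA_expand, Finset.sum_mul]
      refine Finset.sum_congr rfl fun n _ => ?_
      rw [Finset.sum_mul]
      refine Finset.sum_congr rfl fun m _ => ?_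
      rw [ee_add, show ((m-n+β)*a : ZMod d) = a*(m-n) + a*β by ring, ee_add]
      ring
    calc ∑ a : ZMod d, ∑ b : ZMod d, AA d g a b * ee d (a*β + b*α)
        = ∑ a : ZMod d, ∑ b : ZMod d, ∑ n : ZMod d, ∑ m : ZMod d,
            ee d ((m-n+β)*a) *
              (ee d (b*α) * (g n * (starRingEnd ℂ) (g (n-b)) * ((starRingEnd ℂ) (g m) * g (m-b)))) :=
          Finset.sum_congr rfl fun a _ => Finset.sum_congr rfl fun b _ => e1 a b
      _ = ∑ b : ZMod d, ∑ a : ZMod d, ∑ n : ZMod d, ∑ m : ZMod d, _ := Finset.sum_comm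
      _ = ∑ b : ZMod d, ∑ n : ZMod d, ∑ m : ZMod d, ∑ a : ZMod d,
            ee d ((m-n+β)*a) *
              (ee d (b*α) * (g n * (starRingEnd ℂ) (g (n-b)) * ((starRingEnd ℂ) (g m) * g (m-b)))) := by
          refine Finset.sum_congr rfl fun b _ => ?_
          rw [Finset.sum_comm]
          refine Finset.sum_congr rfl fun n _ => ?_
          rw [Finset.sum_comm]
  have step2 : ∀ (b n : ZMod d), ∑ m : ZMod d, ∑ a : ZMod d,
        ee d ((m-n+β)*a) *
          (ee d (b*α) * (g n * (starRingEnd ℂ) (g (n-b)) * ((starRingEnd ℂ) (g m) * g (m-b))))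
      = (d : ℂ) * (ee d (b*α) * (g n * (starRingEnd ℂ) (g (n-b)) *
          ((starRingEnd ℂ) (g (n-β)) * g (n-β-b)))) := by
    intro b n
    have e2 : ∀ m : ZMod d, ∑ a : ZMod d,
          ee d ((m-n+β)*a) *
            (ee d (b*α) * (g n * (starRingEnd ℂ) (g (n-b)) * ((starRingEnd ℂ) (g m) * g (m-b))))
        = if m = n - β then (d : ℂ) * (ee d (b*α) * (g n * (starRingEnd ℂ) (g (n-b)) *
            ((starRingEnd ℂ) (g m) * g (m-b)))) else 0 := by
      intro m
      rw [← Finset.sum_mul, ee_sum]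
      have hiff : (m - n + β = 0) ↔ (m = n - β) := by
        constructor <;> intro h <;> linear_combination h
      rw [if_congr hiff rfl rfl]
      split_ifs with h
      · ring
      · rw [zero_mul]
    rw [Finset.sum_congr rfl fun m _ => e2 m, Finset.sum_ite_eq' Finset.univ (n-β)]
    simp only [Finset.mem_univ, if_true]
  have step3 : ∑ b : ZMod d, ∑ n : ZMod d,
        (d : ℂ) * (ee d (b*α) * (g n * (starRingEnd ℂ) (g (n-b)) *
          ((starRingEnd ℂ) (g (n-β)) * g (n-β-b))))
      = (d : ℂ) * AA d g (-α) β := by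
    rw [AA_expand]
    rw [Finset.sum_comm]
    rw [Finset.mul_sum]
    refine Finset.sum_congr rfl fun n _ => ?_
    rw [Finset.mul_sum]
    refine Fintype.sum_equiv (Equiv.subLeft n) _ _ ?_
    intro b
    simp only [Equiv.subLeft_apply]
    rw [show (-α*((n-b)-n) : ZMod d) = b*α by ring,
        show (n - b - β : ZMod d) = n - β - b by ring]
    ring
  rw [step1]
  rw [Finset.sum_congr rfl fun b _ => Finset.sum_congr rfl fun n _ => step2 b n]
  rw [step3]

def Umat : Matrix (ZMod d × ZMod d) (ZMod d × ZMod d) ℂ :=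
  fun w m => ee d (w.1*m.1 + w.2*m.2)

lemma UG : Umat d * Gmat d g
    = Matrix.diagonal (fun w : ZMod d × ZMod d => (d:ℂ) * AA d g w.2 (-w.1)) * Umat d := by
  ext w q
  rw [Matrix.mul_apply, Matrix.diagonal_mul]
  have e1 : ∀ p : ZMod d × ZMod d, Umat d w p * Gmat d g p q
      = ee d (w.1*p.1 + w.2*p.2) * AA d g (q.1-p.1) (q.2-p.2) := by
    intro p
    rw [Umat, Gmat_eq]
  rw [Finset.sum_congr rfl fun p _ => e1 p]
  have e2 : ∑ p : ZMod d × ZMod d, ee d (w.1*p.1 + w.2*p.2) * AA d g (q.1-p.1) (q.2-p.2)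
      = ∑ m : ZMod d × ZMod d,
          ee d (w.1*q.1 + w.2*q.2) * (AA d g m.1 m.2 * ee d (m.1*(-w.1) + m.2*(-w.2))) := by
    refine (Fintype.sum_equiv (Equiv.subLeft q) _ _ ?_).symm
    intro m
    simp only [Equiv.subLeft_apply, Prod.fst_sub, Prod.snd_sub]
    conv_rhs => rw [show (q.1 - (q.1 - m.1) : ZMod d) = m.1 by ring,
        show (q.2 - (q.2 - m.2) : ZMod d) = m.2 by ring,
        show (w.1*(q.1-m.1) + w.2*(q.2-m.2) : ZMod d)
          = (w.1*q.1 + w.2*q.2) + (m.1*(-w.1) + m.2*(-w.2)) by ring,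
        ee_add]
    ring
  rw [e2, ← Finset.mul_sum]
  rw [Fintype.sum_prod_type]
  rw [key d g (-w.2) (-w.1)]
  rw [neg_neg]
  rw [Umat]
  ring

lemma U_orth (w w' : ZMod d × ZMod d) :
    ∑ m : ZMod d × ZMod d, Umat d w m * (starRingEnd ℂ) (Umat d w' m)
      = if w = w' then ((d:ℂ))^2 else 0 := by
  have e1 : ∀ m : ZMod d × ZMod d, Umat d w m * (starRingEnd ℂ) (Umat d w' m)
      = ee d ((w.1-w'.1)*m.1) * ee d ((w.2-w'.2)*m.2) := by
    intro m
    rw [Umat, Umat, ee_conj, ← ee_add,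
        show (w.1*m.1 + w.2*m.2 + -(w'.1*m.1 + w'.2*m.2) : ZMod d)
          = (w.1-w'.1)*m.1 + (w.2-w'.2)*m.2 by ring, ee_add]
  rw [Finset.sum_congr rfl fun m _ => e1 m, Fintype.sum_prod_type]
  have e2 : ∀ m1 : ZMod d, ∑ m2 : ZMod d, ee d ((w.1-w'.1)*m1) * ee d ((w.2-w'.2)*m2)
      = ee d ((w.1-w'.1)*m1) * (if w.2-w'.2 = 0 then (d:ℂ) else 0) := by
    intro m1
    rw [← Finset.mul_sum, ee_sum]
  rw [Finset.sum_congr rfl fun m1 _ => e2 m1, ← Finset.sum_mul, ee_sum]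
  by_cases h1 : w.1 = w'.1 <;> by_cases h2 : w.2 = w'.2 <;>
    simp [sub_eq_zero, h1, h2, Prod.ext_iff] <;> ring

lemma U_det : IsUnit (Umat d).det := by
  have hd : (d:ℂ) ≠ 0 := Nat.cast_ne_zero.mpr (NeZero.ne d)
  have hinv : Umat d * (((d:ℂ)^2)⁻¹ • (Umat d).conjTranspose) = 1 := by
    ext w w'
    rw [Matrix.mul_apply]
    simp only [Matrix.smul_apply, Matrix.conjTranspose_apply, smul_eq_mul, RCLike.star_def]
    have : ∀ m : ZMod d × ZMod d, Umat d w m * (((d:ℂ)^2)⁻¹ * (starRingEnd ℂ) (Umat d w' m))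
        = ((d:ℂ)^2)⁻¹ * (Umat d w m * (starRingEnd ℂ) (Umat d w' m)) := fun m => by ring
    rw [Finset.sum_congr rfl fun m _ => this m, ← Finset.mul_sum, U_orth, Matrix.one_apply]
    split_ifs with h
    · field_simp
    · rw [mul_zero]
  have := invertibleOfRightInverse _ _ hinv
  exact Matrix.isUnit_det_of_invertible _

lemma rank_eq_card : (Gmat d g).rank
    = Fintype.card {w : ZMod d × ZMod d // (d:ℂ) * AA d g w.2 (-w.1) ≠ 0} := by
  classical
  have h1 : (Gmat d g).rank = (Umat d * Gmat d g).rank :=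
    (Matrix.rank_mul_eq_right_of_isUnit_det (Umat d) (Gmat d g) (U_det d)).symm
  rw [h1, UG, Matrix.rank_mul_eq_left_of_isUnit_det (Umat d) _ (U_det d),
      Matrix.rank_diagonal]

def pswap : (ZMod d × ZMod d) ≃ (ZMod d × ZMod d) :=
  ⟨fun w => (w.2, -w.1), fun p => (-p.2, p.1), fun w => by simp, fun p => by simp⟩

lemma card_eq_ncard :
    Fintype.card {w : ZMod d × ZMod d // (d:ℂ) * AA d g w.2 (-w.1) ≠ 0}
      = {p : ZMod d × ZMod d | inn d g (modT d p.1 p.2 g) ≠ 0}.ncard := by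
  classical
  have hd : (d:ℂ) ≠ 0 := Nat.cast_ne_zero.mpr (NeZero.ne d)
  have hAA : ∀ a b : ZMod d, ((d:ℂ) * AA d g a b ≠ 0) ↔ inn d g (modT d a b g) ≠ 0 := by
    intro a b
    rw [AA]
    constructor
    · intro h hF
      apply h
      rw [show Fc d g a b = inn d g (modT d a b g) from rfl, hF]
      ring
    · intro hF h
      rcases mul_eq_zero.mp h with h' | h'
      · exact hd h'
      · rcases mul_eq_zero.mp h' with h'' | h''
        · exact hF h''
        · exact hF ((map_eq_zero (starRingEnd ℂ)).mp h'')
  have h1 : Fintype.card {w : ZMod d × ZMod d // (d:ℂ) * AA d g w.2 (-w.1) ≠ 0}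
      = Fintype.card {p : ZMod d × ZMod d // inn d g (modT d p.1 p.2 g) ≠ 0} :=
    Fintype.card_congr (Equiv.subtypeEquiv (pswap d) (fun w => hAA w.2 (-w.1)))
  rw [h1, ← Nat.card_coe_set_eq, Nat.card_eq_fintype_card]
  exact Fintype.card_congr (Equiv.subtypeEquivRight fun p => Iff.rfl)

/-- `rank G(g)` equals the number of pairs `(k,ℓ)` with
`⟨g, M^k T^ℓ g⟩ ≠ 0`; consequently `G(g)` has full rank `d²` iff
`⟨g, M^k T^ℓ g⟩ ≠ 0` for all `(k,ℓ)`. -/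
theorem stmt2 (d : ℕ) [NeZero d] (hd : 1 ≤ d) (g : ZMod d → ℂ)
    (hg : ∑ n : ZMod d, ‖g n‖ ^ 2 = 1) :
    (Gmat d g).rank =
      {p : ZMod d × ZMod d | inn d g (modT d p.1 p.2 g) ≠ 0}.ncard ∧
    ((Gmat d g).rank = d ^ 2 ↔
      ∀ k l : ZMod d, inn d g (modT d k l g) ≠ 0) := by
  classical
  have hrank : (Gmat d g).rank
      = {p : ZMod d × ZMod d | inn d g (modT d p.1 p.2 g) ≠ 0}.ncard := by
    rw [rank_eq_card, card_eq_ncard]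
  refine ⟨hrank, ?_⟩
  have hcardU : Nat.card (ZMod d × ZMod d) = d ^ 2 := by
    rw [Nat.card_eq_fintype_card, Fintype.card_prod, ZMod.card, sq]
  constructor
  · intro h
    by_contra hcon
    push_neg at hcon
    obtain ⟨k, l, hk⟩ := hcon
    have hss : {p : ZMod d × ZMod d | inn d g (modT d p.1 p.2 g) ≠ 0} ⊂ Set.univ := by
      rw [Set.ssubset_univ_iff]
      intro hEq
      have hmem : (k, l) ∈ {p : ZMod d × ZMod d | inn d g (modT d p.1 p.2 g) ≠ 0} := by
        rw [hEq]; exact Set.mem_univ _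
      exact hmem hk
    have hlt := Set.ncard_lt_ncard hss Set.finite_univ
    rw [Set.ncard_univ, hcardU] at hlt
    omega
  · intro h
    have hU : {p : ZMod d × ZMod d | inn d g (modT d p.1 p.2 g) ≠ 0} = Set.univ :=
      Set.eq_univ_of_forall (fun p => h p.1 p.2)
    rw [hrank, hU, Set.ncard_univ, hcardU]
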